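/- Let n ≥ 1, let x̲, x̄ : Fin n → ℝ with x̲ i ≤ x̄ i for all i, and let B = {x : Fin n → ℝ | ∀ i, x̲ i ≤ x i ≤ x̄ i} be the corresponding hyperrectangle. Let φ : (Fin n → ℝ) → ℝ be twice continuously differentiable on an open set D containing B, and let λ̲ ∈ ℝ be such that for every x ∈ B, every eigenvalue of the Hessian matrix ∇²φ(x) (the symmetric n×n matrix of second partial derivatives of φ at x) is ≥ λ̲. Then the function φ̆(x) = φ(x) - (1/2) * λ̲ * ∑_{i} (x̲ i - x i) * (x̄ i - x i) is convex on B. -/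

import Mathlib

/-- The Hessian matrix of `f` at `x`: entries are the second partial derivatives of `f`,
expressed via the second iterated Fréchet derivative in coordinate directions. -/
noncomputable def hess {n : ℕ} (f : (Fin n → ℝ) → ℝ) (x : Fin n → ℝ) :
    Matrix (Fin n) (Fin n) ℝ :=
  Matrix.of fun i j => iteratedFDeriv ℝ 2 f x ![Pi.single i 1, Pi.single j 1]


lemma quad_lower_bound {n : ℕ} (H : Matrix (Fin n) (Fin n) ℝ) (hH : H.IsHermitian)
    (lam : ℝ) (hl : ∀ μ : ℝ, ∀ v : Fin n → ℝ, v ≠ 0 → H.mulVec v = μ • v → lam ≤ μ)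
    (v : Fin n → ℝ) : lam * (dotProduct v v) ≤ dotProduct v (H.mulVec v) := by
  have hA : (H - lam • 1).IsHermitian := by
    unfold Matrix.IsHermitian at *
    rw [Matrix.conjTranspose_sub, hH, Matrix.conjTranspose_smul]
    simp
  have heig : ∀ i, 0 ≤ hA.eigenvalues i := by
    intro i
    have hu := hA.mulVec_eigenvectorBasis i
    have hune : (⇑(hA.eigenvectorBasis i) : Fin n → ℝ) ≠ 0 := by
      have := hA.eigenvectorBasis.orthonormal.ne_zero i
      intro h
      apply this
      ext j
      exact congrFun h j
    rw [Matrix.sub_mulVec, Matrix.smul_mulVec, Matrix.one_mulVec, sub_eq_iff_eq_add] at hu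
    have hH' : H.mulVec (⇑(hA.eigenvectorBasis i)) = (hA.eigenvalues i + lam) • ⇑(hA.eigenvectorBasis i) := by
      rw [hu, add_smul]
    have := hl _ _ hune hH'
    linarith
  have hpsd := hA.posSemidef_iff_eigenvalues_nonneg.mpr heig
  have h0 := hpsd.dotProduct_mulVec_nonneg v
  simp only [star_trivial, Matrix.sub_mulVec, Matrix.smul_mulVec, Matrix.one_mulVec,
    dotProduct_sub, dotProduct_smul, smul_eq_mul] at h0
  linarith

lemma hess_apply {n : ℕ} (f : (Fin n → ℝ) → ℝ) (z : Fin n → ℝ) (i j : Fin n) :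
    hess f z i j = fderiv ℝ (fderiv ℝ f) z (Pi.single i 1) (Pi.single j 1) := by
  show iteratedFDeriv ℝ 2 f z ![Pi.single i 1, Pi.single j 1] = _
  rw [iteratedFDeriv_two_apply]
  simp

lemma hess_isHermitian {n : ℕ} {φ : (Fin n → ℝ) → ℝ} {z : Fin n → ℝ}
    (hz : ContDiffAt ℝ 2 φ z) : (hess φ z).IsHermitian := by
  have hsymm := hz.isSymmSndFDerivAt (by simp)
  ext i j
  simp only [Matrix.conjTranspose_apply, star_trivial, hess_apply]
  exact hsymm _ _
lemma snd_deriv_eq_quadform {n : ℕ} (f : (Fin n → ℝ) → ℝ) (z : Fin n → ℝ) (v : Fin n → ℝ) :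
    fderiv ℝ (fderiv ℝ f) z v v = dotProduct v ((hess f z).mulVec v) := by
  set F2 := fderiv ℝ (fderiv ℝ f) z with hF2
  have hv : v = ∑ i, v i • (Pi.single i 1 : Fin n → ℝ) := by
    ext j
    simp [Pi.single_apply, Finset.sum_apply]
  have h1 : F2 v = ∑ i, v i • F2 (Pi.single i 1) := by
    conv_lhs => rw [hv]
    rw [map_sum]
    simp only [map_smul]
  have h2 : ∀ i, F2 (Pi.single i 1) v = ∑ j, v j * hess f z i j := by
    intro i
    conv_lhs => rw [hv]
    rw [map_sum]
    refine Finset.sum_congr rfl fun j _ => ?_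
    rw [map_smul, hess_apply]
    simp [hF2]
  rw [h1, ContinuousLinearMap.sum_apply]
  unfold dotProduct Matrix.mulVec
  refine Finset.sum_congr rfl fun i _ => ?_
  rw [ContinuousLinearMap.smul_apply, smul_eq_mul, h2]
  simp only [dotProduct]
  congr 1
  exact Finset.sum_congr rfl fun j _ => by ring

/-- Convexity of the αBB underestimator on a hyperrectangle. -/
theorem alphaBB_convex
    (n : ℕ) (hn : 0 < n)
    (xl xu : Fin n → ℝ) (hx : ∀ i, xl i ≤ xu i)
    (D : Set (Fin n → ℝ)) (hD : IsOpen D)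
    (hBD : {x : Fin n → ℝ | ∀ i, xl i ≤ x i ∧ x i ≤ xu i} ⊆ D)
    (φ : (Fin n → ℝ) → ℝ) (hφ : ContDiffOn ℝ 2 φ D)
    (lam : ℝ)
    (hlam : ∀ x ∈ {x : Fin n → ℝ | ∀ i, xl i ≤ x i ∧ x i ≤ xu i},
      ∀ μ : ℝ, ∀ v : Fin n → ℝ, v ≠ 0 → (hess φ x).mulVec v = μ • v → lam ≤ μ) :
    ConvexOn ℝ {x : Fin n → ℝ | ∀ i, xl i ≤ x i ∧ x i ≤ xu i}
      (fun x => φ x - (1 / 2 : ℝ) * lam * ∑ i, (xl i - x i) * (xu i - x i)) := by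
  have hBconv : Convex ℝ {x : Fin n → ℝ | ∀ i, xl i ≤ x i ∧ x i ≤ xu i} := by
    intro p hp q hq a b ha hb hab
    intro i
    simp only [Pi.add_apply, Pi.smul_apply, smul_eq_mul]
    have e1 : a * xl i + b * xl i = xl i := by rw [← add_mul, hab, one_mul]
    have e2 : a * xu i + b * xu i = xu i := by rw [← add_mul, hab, one_mul]
    constructor
    · nlinarith [mul_le_mul_of_nonneg_left (hp i).1 ha, mul_le_mul_of_nonneg_left (hq i).1 hb]
    · nlinarith [mul_le_mul_of_nonneg_left (hp i).2 ha, mul_le_mul_of_nonneg_left (hq i).2 hb]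
  have hφdiff : DifferentiableOn ℝ φ D := hφ.differentiableOn two_ne_zero
  have hFc : ContDiffOn ℝ 1 (fderiv ℝ φ) D := hφ.fderiv_of_isOpen hD (by norm_num)
  refine ⟨hBconv, fun x hx' y hy' a b ha hb hab => ?_⟩
  set v : Fin n → ℝ := y - x with hvdef
  have hmem : ∀ t ∈ Set.Icc (0:ℝ) 1,
      (x + t • v) ∈ {x : Fin n → ℝ | ∀ i, xl i ≤ x i ∧ x i ≤ xu i} :=
    fun t ht => hBconv.add_smul_sub_mem hx' hy' ht
  have hmemD : ∀ t ∈ Set.Icc (0:ℝ) 1, (x + t • v) ∈ D := fun t ht => hBD (hmem t ht)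
  set g : ℝ → ℝ := fun t => φ (x + t • v)
    - (1/2 : ℝ) * lam * ∑ i, (xl i - (x i + t * v i)) * (xu i - (x i + t * v i)) with hgdef
  set g' : ℝ → ℝ := fun t => fderiv ℝ φ (x + t • v) v
    - (1/2 : ℝ) * lam * ∑ i, (-(v i) * (xu i - (x i + t * v i))
        + (xl i - (x i + t * v i)) * (-(v i))) with hg'def
  set g'' : ℝ → ℝ := fun t => fderiv ℝ (fderiv ℝ φ) (x + t • v) v v
    - (1/2 : ℝ) * lam * ∑ i, (-(v i) * (-(v i)) + (-(v i)) * (-(v i))) with hg''def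
  have hL : ∀ t : ℝ, HasDerivAt (fun s : ℝ => x + s • v) v t := by
    intro t
    simpa using ((hasDerivAt_id t).smul_const v).const_add x
  have hlin : ∀ (i : Fin n) (t : ℝ), HasDerivAt (fun s : ℝ => x i + s * v i) (v i) t := by
    intro i t
    simpa using (hasDerivAt_mul_const (v i)).const_add (x i)
  have hgd : ∀ t ∈ Set.Icc (0:ℝ) 1, HasDerivAt g (g' t) t := by
    intro t ht
    refine HasDerivAt.sub ?_ ?_
    · exact ((hφdiff.differentiableAt (hD.mem_nhds (hmemD t ht))).hasFDerivAt).comp_hasDerivAt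
        t (hL t)
    · refine HasDerivAt.const_mul _ (HasDerivAt.fun_sum fun i _ => ?_)
      exact ((hlin i t).const_sub (xl i)).mul ((hlin i t).const_sub (xu i))
  have hgd2 : ∀ t ∈ Set.Icc (0:ℝ) 1, HasDerivAt g' (g'' t) t := by
    intro t ht
    refine HasDerivAt.sub ?_ ?_
    · have hF : HasFDerivAt (fderiv ℝ φ) (fderiv ℝ (fderiv ℝ φ) (x + t • v)) (x + t • v) :=
        ((hFc.differentiableOn one_ne_zero).differentiableAt (hD.mem_nhds (hmemD t ht))).hasFDerivAt
      have h1 : HasDerivAt ((fderiv ℝ φ) ∘ (fun s : ℝ => x + s • v))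
          (fderiv ℝ (fderiv ℝ φ) (x + t • v) v) t :=
        hF.comp_hasDerivAt (f := fun s : ℝ => x + s • v) t (hL t)
      have := h1.clm_apply (hasDerivAt_const t v)
      simpa using this
    · refine HasDerivAt.const_mul _ (HasDerivAt.fun_sum fun i _ => ?_)
      exact (((hlin i t).const_sub (xu i)).const_mul (-(v i))).add
        (((hlin i t).const_sub (xl i)).mul_const (-(v i)))
  have hg''nonneg : ∀ t ∈ Set.Icc (0:ℝ) 1, 0 ≤ g'' t := by
    intro t ht
    have hzB := hmem t ht
    have hkey := quad_lower_bound (hess φ (x + t • v))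
      (hess_isHermitian (hφ.contDiffAt (hD.mem_nhds (hBD hzB)))) lam (hlam _ hzB) v
    have hq := snd_deriv_eq_quadform φ (x + t • v) v
    have hsum : ∑ i, (-(v i) * (-(v i)) + (-(v i)) * (-(v i))) = 2 * ∑ i, v i * v i := by
      rw [Finset.mul_sum]
      exact Finset.sum_congr rfl fun i _ => by ring
    have hdot : dotProduct v v = ∑ i, v i * v i := rfl
    simp only [hg''def]
    rw [hq, hsum]
    rw [hdot] at hkey
    linarith
  have hgc : ConvexOn ℝ (Set.Icc (0:ℝ) 1) g := by
    refine convexOn_of_hasDerivWithinAt2_nonneg (f' := g') (f'' := g'') (convex_Icc 0 1) ?_ ?_ ?_ ?_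
    · -- continuity of g on Icc 0 1
      have hqc : Continuous fun t : ℝ =>
          (1/2 : ℝ) * lam * ∑ i, (xl i - (x i + t * v i)) * (xu i - (x i + t * v i)) := by
        refine continuous_const.mul (continuous_finset_sum _ fun i _ => ?_)
        fun_prop
      have hLc : Continuous fun t : ℝ => x + t • v := by fun_prop
      exact (hφ.continuousOn.comp hLc.continuousOn (fun t ht => hmemD t ht)).sub
        hqc.continuousOn
    · intro t ht
      rw [interior_Icc] at ht
      exact (hgd t (Set.Ioo_subset_Icc_self ht)).hasDerivWithinAt
    · intro t ht
      rw [interior_Icc] at ht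
      exact (hgd2 t (Set.Ioo_subset_Icc_self ht)).hasDerivWithinAt
    · intro t ht
      rw [interior_Icc] at ht
      exact hg''nonneg t (Set.Ioo_subset_Icc_self ht)
  have hineq := hgc.2 (Set.left_mem_Icc.2 zero_le_one) (Set.right_mem_Icc.2 zero_le_one)
    ha hb hab
  have hab' : a • (0:ℝ) + b • (1:ℝ) = b := by simp
  rw [hab'] at hineq
  have hg0 : g 0 = φ x - (1/2 : ℝ) * lam * ∑ i, (xl i - x i) * (xu i - x i) := by
    simp [hgdef]
  have hg1 : g 1 = φ y - (1/2 : ℝ) * lam * ∑ i, (xl i - y i) * (xu i - y i) := by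
    have h1 : x + (1:ℝ) • v = y := by
      rw [one_smul, hvdef]; abel
    have h2 : ∀ i, x i + 1 * v i = y i := by
      intro i
      have := congrFun h1 i
      simpa using this
    simp only [hgdef, h1]
    congr 1
    congr 1
    exact Finset.sum_congr rfl fun i _ => by rw [h2 i]
  have hgb : g b = φ (a • x + b • y)
      - (1/2 : ℝ) * lam * ∑ i, (xl i - (a • x + b • y) i) * (xu i - (a • x + b • y) i) := by
    have hb1 : x + b • v = a • x + b • y := by
      have haa : a = 1 - b := by linarith
      rw [haa, hvdef]
      module
    have hb2 : ∀ i, x i + b * v i = (a • x + b • y) i := by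
      intro i
      have := congrFun hb1 i
      simpa using this
    simp only [hgdef, hb1]
    congr 1
    congr 1
    exact Finset.sum_congr rfl fun i _ => by rw [hb2 i]
  rw [hg0, hg1, hgb] at hineq
  simpa using hineq
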